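/- There is no measurable reduction from E₀ to equality on Cantor space: there is no measurable function f : 2^ℕ → 2^ℕ such that for all x, y, x E₀ y ↔ f(x) = f(y). -/

import Mathlib

open MeasureTheory

def E0 (x y : ℕ → Bool) : Prop := {n : ℕ | x n ≠ y n}.Finite

open Topology Filter Set

namespace StmtSix

/-- Flip the coordinates indicated by the mask `a`. -/
def flipm (a : ℕ → Bool) (x : ℕ → Bool) : ℕ → Bool := fun n => xor (a n) (x n)

lemma flipm_flipm (a x : ℕ → Bool) : flipm a (flipm a x) = x := by
  funext n; simp [flipm]

lemma continuous_flipm (a : ℕ → Bool) : Continuous (flipm a) := by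
  refine continuous_pi fun n => ?_
  exact (continuous_of_discreteTopology (f := fun b : Bool => xor (a n) b)).comp
    (continuous_apply n)

/-- `flipm a` as a homeomorphism. -/
def flipHomeo (a : ℕ → Bool) : (ℕ → Bool) ≃ₜ (ℕ → Bool) where
  toFun := flipm a
  invFun := flipm a
  left_inv := flipm_flipm a
  right_inv := flipm_flipm a
  continuous_toFun := continuous_flipm a
  continuous_invFun := continuous_flipm a

lemma e0_flipm {a : ℕ → Bool} (ha : {n | a n = true}.Finite) (x : ℕ → Bool) :
    E0 x (flipm a x) := by
  refine ha.subset fun n hn => ?_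
  simp only [mem_setOf_eq, flipm] at hn ⊢
  by_contra h
  rw [Bool.not_eq_true] at h
  simp [h] at hn

/-- Sets that agree with a fixed point off a finite set are finite. -/
lemma finite_agree_off (x : ℕ → Bool) (F : Finset ℕ) :
    {y : ℕ → Bool | ∀ n ∉ F, y n = x n}.Finite := by
  have : Finite (F → Bool) := inferInstance
  apply Set.Finite.of_finite_image (f := fun y => fun i : F => y i)
  · exact Set.toFinite _
  · intro y hy z hz h
    funext n
    by_cases hn : n ∈ F
    · exact congrFun h ⟨n, hn⟩
    · rw [hy n hn, hz n hn]

lemma e0_class_countable (x : ℕ → Bool) : {y | E0 x y}.Countable := by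
  have : {y | E0 x y} ⊆ ⋃ F : Finset ℕ, {y : ℕ → Bool | ∀ n ∉ F, y n = x n} := by
    intro y hy
    have h : {n | x n ≠ y n}.Finite := hy
    exact mem_iUnion.2 ⟨h.toFinset, fun n hn => by
      by_contra hne
      exact hn (h.mem_toFinset.2 fun hxy => hne hxy.symm)⟩
  exact (Set.countable_iUnion fun F => (finite_agree_off x F).countable).mono this

/-- Every point of `ℕ → Bool` is a limit of other points. -/
lemma mem_closure_compl_singleton (x : ℕ → Bool) : x ∈ closure ({x}ᶜ : Set (ℕ → Bool)) := by
  have htend : Filter.Tendsto (fun k => Function.update x k (!x k)) Filter.atTop (nhds x) := by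
    rw [tendsto_pi_nhds]
    intro n
    refine Filter.Tendsto.congr' ?_ tendsto_const_nhds
    filter_upwards [Filter.eventually_gt_atTop n] with k hk
    rw [Function.update_of_ne (by omega)]
  refine mem_closure_of_tendsto htend ?_
  filter_upwards with k
  simp only [Set.mem_compl_iff, Set.mem_singleton_iff]
  intro h
  have := congrFun h k
  simp [Function.update_self] at this

lemma isMeagre_iUnion' {ι : Type*} [Countable ι] {s : ι → Set (ℕ → Bool)}
    (h : ∀ i, IsMeagre (s i)) : IsMeagre (⋃ i, s i) := by
  rw [IsMeagre, Set.compl_iUnion]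
  exact countable_iInter_mem.2 h

lemma isMeagre_of_countable {s : Set (ℕ → Bool)} (hs : s.Countable) : IsMeagre s := by
  have h1 : ∀ x : ℕ → Bool, IsMeagre ({x} : Set (ℕ → Bool)) := by
    intro x
    rw [IsMeagre]
    refine residual_of_dense_open (isOpen_compl_singleton) ?_
    rw [dense_iff_closure_eq, Set.eq_univ_iff_forall]
    intro y
    by_cases hy : y = x
    · subst hy; exact mem_closure_compl_singleton y
    · exact subset_closure hy
  have hsub : s ⊆ ⋃ x ∈ s, ({x} : Set (ℕ → Bool)) := fun y hy => by
    simp only [Set.mem_iUnion]; exact ⟨y, hy, rfl⟩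
  refine IsMeagre.mono hsub ?_
  rw [IsMeagre, Set.compl_iUnion₂]
  exact (countable_bInter_mem hs).2 fun x hx => h1 x

lemma isMeagre_image_flipm {a : ℕ → Bool} {s : Set (ℕ → Bool)} (hs : IsMeagre s) :
    IsMeagre (flipm a '' s) := by
  have himg : flipm a '' s = flipm a ⁻¹' s := by
    ext y
    constructor
    · rintro ⟨z, hz, rfl⟩
      simpa [flipm_flipm] using hz
    · intro hy
      exact ⟨flipm a y, hy, flipm_flipm a y⟩
  rw [himg]
  exact hs.preimage_of_isOpenMap (continuous_flipm a) (flipHomeo a).isOpenMap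

/-- Topological zero-one law for E₀-invariant measurable sets. -/
lemma zero_one {A : Set (ℕ → Bool)} (hA : MeasurableSet A)
    (hinv : ∀ x y, E0 x y → (x ∈ A ↔ y ∈ A)) : IsMeagre A ∨ IsMeagre Aᶜ := by
  classical
  obtain ⟨U, hUo, hAU⟩ := hA.residualEq_isOpen
  have hsymm : IsMeagre (U \ A) := by
    rw [IsMeagre]
    have hmem : {x | x ∈ A ↔ x ∈ U} ∈ residual _ := by
      have := Filter.eventuallyEq_set.mp hAU
      rwa [Filter.eventually_iff] at this
    refine Filter.mem_of_superset hmem fun z hz => ?_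
    simp only [Set.mem_compl_iff, Set.mem_diff, not_and, not_not]
    exact fun hzU => hz.mpr hzU
  rcases eq_empty_or_nonempty U with rfl | ⟨x, hx⟩
  · left
    rw [IsMeagre]
    have hmem : {z | z ∈ A ↔ z ∈ (∅ : Set (ℕ → Bool))} ∈ residual _ := by
      have := Filter.eventuallyEq_set.mp hAU
      rwa [Filter.eventually_iff] at this
    refine Filter.mem_of_superset hmem fun z hz => ?_
    simp only [Set.mem_setOf_eq, Set.mem_empty_iff_false, iff_false] at hz
    exact hz
  · right
    -- find a basic clopen set inside U
    have hU : U ∈ nhds x := hUo.mem_nhds hx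
    rw [nhds_pi, Filter.mem_pi] at hU
    obtain ⟨I, hI, V, hV, hVU⟩ := hU
    set F : Finset ℕ := hI.toFinset with hFdef
    set W : Set (ℕ → Bool) := {y | ∀ i ∈ F, y i = x i} with hWdef
    have hWU : W ⊆ U := by
      intro y hy
      apply hVU
      intro i hi
      have : y i = x i := hy i (hI.mem_toFinset.2 hi)
      rw [this]
      exact mem_of_mem_nhds (hV i)
    have hM : IsMeagre (W \ A) := IsMeagre.mono (Set.diff_subset_diff_left hWU) hsymm
    -- the extension of a partial mask on F
    set ext : (F → Bool) → (ℕ → Bool) :=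
      fun b n => if h : n ∈ F then b ⟨n, h⟩ else false with hext
    have hcover : Aᶜ ⊆ ⋃ b : F → Bool, flipm (ext b) '' (W \ A) := by
      intro y hy
      set a : ℕ → Bool := fun n => if n ∈ F then xor (y n) (x n) else false with ha
      have hafin : {n | a n = true}.Finite := by
        refine (F : Set ℕ).toFinite.subset fun n hn => ?_
        simp only [mem_setOf_eq, ha] at hn
        by_contra h
        rw [if_neg (fun hF => h (Finset.mem_coe.mpr hF))] at hn
        exact Bool.false_ne_true hn
      set z : ℕ → Bool := flipm a y with hz
      have hzW : z ∈ W := by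
        intro i hi
        simp only [hz, flipm, ha, if_pos hi]
        cases y i <;> cases x i <;> rfl
      have hzA : z ∉ A := fun h => hy ((hinv y z (e0_flipm hafin y)).mpr h)
      refine mem_iUnion.2 ⟨fun i : F => a i, ⟨z, ⟨hzW, hzA⟩, ?_⟩⟩
      have hexta : ext (fun i : F => a i) = a := by
        funext n
        simp only [hext, ha]
        by_cases h : n ∈ F
        · simp [h]
        · simp [h]
      rw [hexta, hz, flipm_flipm]
    exact (isMeagre_iUnion' fun b => isMeagre_image_flipm hM).mono hcover

end StmtSix

theorem stmt_6 :
    ¬ ∃ f : (ℕ → Bool) → (ℕ → Bool),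
        Measurable f ∧ ∀ x y, E0 x y ↔ f x = f y := by
  classical
  rintro ⟨f, hf, hred⟩
  -- coordinate sets of f are E₀-invariant measurable sets
  have hAmeas : ∀ n : ℕ, MeasurableSet {x : ℕ → Bool | f x n = true} := by
    intro n
    exact hf (show MeasurableSet ((fun g : ℕ → Bool => g n) ⁻¹' {true}) from
      measurable_pi_apply n (MeasurableSet.singleton true))
  have hAinv : ∀ n : ℕ, ∀ x y, E0 x y →
      (x ∈ {x : ℕ → Bool | f x n = true} ↔ y ∈ {x : ℕ → Bool | f x n = true}) := by
    intro n x y hxy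
    have : f x = f y := (hred x y).mp hxy
    simp only [Set.mem_setOf_eq, this]
  -- for each n, pick the "generic" value c n of f · n
  have key : ∀ n : ℕ, ∃ c : Bool, {x : ℕ → Bool | f x n = c} ∈ residual _ := by
    intro n
    rcases StmtSix.zero_one (hAmeas n) (hAinv n) with h | h
    · refine ⟨false, ?_⟩
      rw [IsMeagre] at h
      convert h using 1
      ext x
      simp
    · refine ⟨true, ?_⟩
      rw [IsMeagre, compl_compl] at h
      exact h
  choose c hc using key
  -- the set where f takes the generic value is comeager
  have hS : {x : ℕ → Bool | ∀ n, f x n = c n} ∈ residual _ := by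
    have : {x : ℕ → Bool | ∀ n, f x n = c n} = ⋂ n, {x : ℕ → Bool | f x n = c n} := by
      ext x; simp
    rw [this]
    exact countable_iInter_mem.2 hc
  set S := {x : ℕ → Bool | ∀ n, f x n = c n} with hSdef
  obtain ⟨x₀, hx₀⟩ : S.Nonempty := (dense_of_mem_residual hS).nonempty
  -- but S is contained in a single E₀ class, hence countable, hence meager
  have hsub : S ⊆ {y | E0 x₀ y} := by
    intro y hy
    refine (hred x₀ y).mpr ?_
    funext n
    rw [hx₀ n, hy n]
  have hmeag : IsMeagre S :=
    (StmtSix.isMeagre_of_countable (StmtSix.e0_class_countable x₀)).mono hsub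
  rw [IsMeagre] at hmeag
  have : (S ∩ Sᶜ : Set (ℕ → Bool)).Nonempty :=
    (dense_of_mem_residual (Filter.inter_mem hS hmeag)).nonempty
  obtain ⟨z, hz1, hz2⟩ := this
  exact hz2 hz1
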